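/- Let f : ℝⁿ → ℝⁿ be Lipschitz with f(0) = 0, let D ⊆ ℝⁿ be an open set containing 0, and let V : ℝⁿ → ℝ be continuously differentiable with V(0) = 0, V(z) > 0 for z ∈ D \ {0}, and ⟨∇V(z), f(z)⟩ < 0 for z ∈ D \ {0}. Let γ > 0 be such that the sublevel set S = {z : V(z) ≤ γ} is compact and {z ≠ 0 : V(z) < γ} ⊆ D. Then the strict sublevel set {z : V(z) < γ} is contained in the region of attraction of the origin: every differentiable curve z : [0,∞) → ℝⁿ with z'(t) = f(z(t)) for all t ≥ 0 and V(z(0)) < γ satisfies V(z(t)) < γ for all t ≥ 0 and z(t) → 0 as t → ∞. -/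

import Mathlib

/-- **Sublevel sets of a Lyapunov function are inside the region of attraction.**
Let `f` be Lipschitz with `f 0 = 0`, `D` open containing `0`, and `V` continuously
differentiable with `V 0 = 0`, `V > 0` on `D \ {0}` and `⟪∇V, f⟫ < 0` on `D \ {0}`.
If `γ > 0` is such that `{z | V z ≤ γ}` is compact and `{z | z ≠ 0 ∧ V z < γ} ⊆ D`, then
every solution starting in the strict sublevel set `{V < γ}` stays in it and converges to
the origin. -/
theorem stmt_5 {n : ℕ}
    (f : EuclideanSpace ℝ (Fin n) → EuclideanSpace ℝ (Fin n))
    (K : NNReal) (hf : LipschitzWith K f) (hf0 : f 0 = 0)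
    (D : Set (EuclideanSpace ℝ (Fin n))) (hD : IsOpen D)
    (h0D : (0 : EuclideanSpace ℝ (Fin n)) ∈ D)
    (V : EuclideanSpace ℝ (Fin n) → ℝ) (hV : ContDiff ℝ 1 V)
    (hV0 : V 0 = 0)
    (hVpos : ∀ z ∈ D, z ≠ 0 → 0 < V z)
    (hVdot : ∀ z ∈ D, z ≠ 0 → (inner ℝ (gradient V z) (f z) : ℝ) < 0)
    (γ : ℝ) (hγ : 0 < γ)
    (hcompact : IsCompact {z : EuclideanSpace ℝ (Fin n) | V z ≤ γ})
    (hsub : {z : EuclideanSpace ℝ (Fin n) | z ≠ 0 ∧ V z < γ} ⊆ D) :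
    ∀ z : ℝ → EuclideanSpace ℝ (Fin n),
      (∀ t, 0 ≤ t → HasDerivAt z (f (z t)) t) →
      V (z 0) < γ →
      (∀ t, 0 ≤ t → V (z t) < γ) ∧ Filter.Tendsto z Filter.atTop (nhds 0) := by
  intro z hz hz0
  have hVdiff : Differentiable ℝ V := hV.differentiable one_ne_zero
  set g : EuclideanSpace ℝ (Fin n) → ℝ := fun x => inner ℝ (gradient V x) (f x) with hgdef
  have hgradcont : Continuous (fun x => gradient V (x : EuclideanSpace ℝ (Fin n))) := by
    have h2 := hV.continuous_fderiv one_ne_zero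
    exact ((InnerProductSpace.toDual ℝ (EuclideanSpace ℝ (Fin n))).symm.continuous.comp h2)
  have hgcont : Continuous g := hgradcont.inner hf.continuous
  set W : ℝ → ℝ := fun t => V (z t) with hWdef
  have hW' : ∀ t, 0 ≤ t → HasDerivAt W (g (z t)) t := by
    intro t ht
    have h1 : HasFDerivAt V
        (InnerProductSpace.toDual ℝ (EuclideanSpace ℝ (Fin n)) (gradient V (z t))) (z t) :=
      (hVdiff (z t)).hasGradientAt.hasFDerivAt
    have := h1.comp_hasDerivAt t (hz t ht)
    exact this
  have hWcont : ∀ t, 0 ≤ t → ContinuousAt W t := fun t ht => (hW' t ht).continuousAt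
  have hkey : ∀ x : EuclideanSpace ℝ (Fin n), V x < γ → g x ≤ 0 := by
    intro x hx
    by_cases h0 : x = 0
    · simp [g, h0, hf0]
    · exact le_of_lt (hVdot x (hsub ⟨h0, hx⟩) h0)
  -- invariance
  have hstay : ∀ t, 0 ≤ t → W t < γ := by
    by_contra h
    push_neg at h
    obtain ⟨t₁, ht₁, hWt₁⟩ := h
    set T := {t : ℝ | 0 ≤ t ∧ γ ≤ W t} with hT
    have hTne : T.Nonempty := ⟨t₁, ht₁, hWt₁⟩
    have hTbdd : BddBelow T := ⟨0, fun t ht => ht.1⟩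
    set t₀ := sInf T with ht₀def
    have ht₀0 : 0 ≤ t₀ := le_csInf hTne fun t ht => ht.1
    have ht₀cl : t₀ ∈ closure T := csInf_mem_closure hTne hTbdd
    have ht₀mem : γ ≤ W t₀ := by
      have hne : (nhdsWithin t₀ T).NeBot := mem_closure_iff_nhdsWithin_neBot.mp ht₀cl
      have htend : Filter.Tendsto W (nhdsWithin t₀ T) (nhds (W t₀)) :=
        ((hWcont t₀ ht₀0).continuousWithinAt)
      exact ge_of_tendsto htend (Filter.eventually_inf_principal.mpr
        (Filter.Eventually.of_forall fun s hs => hs.2))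
    have hlt : ∀ s, 0 ≤ s → s < t₀ → W s < γ := by
      intro s hs hst
      by_contra h'
      push_neg at h'
      exact absurd (csInf_le hTbdd ⟨hs, h'⟩) (not_le.mpr hst)
    have hanti : AntitoneOn W (Set.Icc 0 t₀) := by
      apply antitoneOn_of_deriv_nonpos (convex_Icc 0 t₀)
      · exact fun s hs => ((hWcont s hs.1).continuousWithinAt)
      · intro s hs
        rw [interior_Icc] at hs
        exact ((hW' s hs.1.le).differentiableAt).differentiableWithinAt
      · intro s hs
        rw [interior_Icc] at hs
        rw [(hW' s hs.1.le).deriv]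
        exact hkey _ (hlt s hs.1.le hs.2)
    have h1 : W t₀ ≤ W 0 :=
      hanti (Set.left_mem_Icc.mpr ht₀0) (Set.right_mem_Icc.mpr ht₀0) ht₀0
    have : W 0 < γ := hz0
    linarith
  -- monotonicity on [0, ∞)
  have hanti : AntitoneOn W (Set.Ici 0) := by
    apply antitoneOn_of_deriv_nonpos (convex_Ici 0)
    · exact fun s hs => ((hWcont s hs).continuousWithinAt)
    · intro s hs
      rw [interior_Ici] at hs
      exact ((hW' s hs.le).differentiableAt).differentiableWithinAt
    · intro s hs
      rw [interior_Ici] at hs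
      rw [(hW' s hs.le).deriv]
      exact hkey _ (hstay s hs.le)
  have hWnn : ∀ t, 0 ≤ t → 0 ≤ W t := by
    intro t ht
    by_cases h0 : z t = 0
    · simp [W, h0, hV0]
    · exact (hVpos _ (hsub ⟨h0, hstay t ht⟩) h0).le
  -- limit of W
  set u : ℝ → ℝ := fun t => W (max t 0) with hudef
  have hu : Antitone u := fun a b hab =>
    hanti (Set.mem_Ici.mpr (le_max_right a 0)) (Set.mem_Ici.mpr (le_max_right b 0))
      (max_le_max hab le_rfl)
  have hubdd : BddBelow (Set.range u) := by
    refine ⟨0, ?_⟩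
    rintro x ⟨t, rfl⟩
    exact hWnn _ (le_max_right t 0)
  set c : ℝ := ⨅ t, u t with hcdef
  have hutends : Filter.Tendsto u Filter.atTop (nhds c) := tendsto_atTop_ciInf hu hubdd
  have hWtends : Filter.Tendsto W Filter.atTop (nhds c) := by
    apply hutends.congr'
    filter_upwards [Filter.eventually_ge_atTop (0 : ℝ)] with t ht
    simp [u, max_eq_left ht]
  have hcle : ∀ t, 0 ≤ t → c ≤ W t := by
    intro t ht
    have := ciInf_le hubdd t
    simpa [u, max_eq_left ht] using this
  have hcnn : 0 ≤ c := le_ciInf fun t => hWnn _ (le_max_right t 0)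
  have hc0 : c = 0 := by
    by_contra hc
    have hcpos : 0 < c := lt_of_le_of_ne hcnn (Ne.symm hc)
    set A := {x : EuclideanSpace ℝ (Fin n) | V x ≤ γ} ∩
      {x : EuclideanSpace ℝ (Fin n) | c ≤ V x ∧ V x ≤ W 0} with hAdef
    have hAclosed : IsClosed {x : EuclideanSpace ℝ (Fin n) | c ≤ V x ∧ V x ≤ W 0} := by
      have : {x : EuclideanSpace ℝ (Fin n) | c ≤ V x ∧ V x ≤ W 0} =
          V ⁻¹' (Set.Icc c (W 0)) := rfl
      rw [this]
      exact isClosed_Icc.preimage hV.continuous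
    have hAcomp : IsCompact A := hcompact.inter_right hAclosed
    have hAne : A.Nonempty := ⟨z 0, le_of_lt hz0, hcle 0 le_rfl, le_rfl⟩
    have hAsub : ∀ x ∈ A, g x < 0 := by
      rintro x ⟨hx1, hx2, hx3⟩
      have hx0 : x ≠ 0 := by
        intro h; rw [h, hV0] at hx2; linarith
      have hxD : x ∈ D := hsub ⟨hx0, lt_of_le_of_lt hx3 hz0⟩
      exact hVdot x hxD hx0
    obtain ⟨x₀, hx₀A, hx₀max⟩ := hAcomp.exists_isMaxOn hAne hgcont.continuousOn
    have hδpos : 0 < -g x₀ := by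
      have := hAsub x₀ hx₀A
      linarith
    have hzA : ∀ t, 0 ≤ t → z t ∈ A := by
      intro t ht
      exact ⟨le_of_lt (hstay t ht), hcle t ht,
        hanti (Set.mem_Ici.mpr le_rfl) (Set.mem_Ici.mpr ht) ht⟩
    have hgle : ∀ t, 0 ≤ t → g (z t) ≤ g x₀ := fun t ht => hx₀max (hzA t ht)
    -- φ t = W t - g x₀ * t is antitone on [0,∞)
    have hφ' : ∀ t, 0 ≤ t →
        HasDerivAt (fun s => W s - g x₀ * s) (g (z t) - g x₀) t := by
      intro t ht
      have h2 : HasDerivAt (fun s : ℝ => g x₀ * s) (g x₀) t := by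
        simpa using (hasDerivAt_id t).const_mul (g x₀)
      exact (hW' t ht).sub h2
    have hφanti : AntitoneOn (fun s => W s - g x₀ * s) (Set.Ici 0) := by
      apply antitoneOn_of_deriv_nonpos (convex_Ici 0)
      · exact fun s hs => ((hφ' s hs).continuousAt).continuousWithinAt
      · intro s hs
        rw [interior_Ici] at hs
        exact ((hφ' s hs.le).differentiableAt).differentiableWithinAt
      · intro s hs
        rw [interior_Ici] at hs
        rw [(hφ' s hs.le).deriv]
        linarith [hgle s hs.le]
    obtain ⟨t₂, ht₂0, ht₂⟩ : ∃ t₂ : ℝ, 0 ≤ t₂ ∧ W 0 + g x₀ * t₂ < c := by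
      refine ⟨(W 0 - c) / (-g x₀) + 1, ?_, ?_⟩
      · have : 0 ≤ (W 0 - c) / (-g x₀) :=
          div_nonneg (by linarith [hcle 0 le_rfl]) hδpos.le
        linarith
      · have h3 : g x₀ * ((W 0 - c) / (-g x₀) + 1) = -(W 0 - c) + g x₀ := by
          have hgne : g x₀ ≠ 0 := by linarith
          field_simp
        rw [h3]
        linarith
    have h1 : W t₂ - g x₀ * t₂ ≤ W 0 - g x₀ * 0 :=
      hφanti (Set.mem_Ici.mpr le_rfl) (Set.mem_Ici.mpr ht₂0) ht₂0
    have h4 : c ≤ W t₂ := hcle t₂ ht₂0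
    simp only [mul_zero, sub_zero] at h1
    linarith
  -- convergence of z to 0
  refine ⟨hstay, ?_⟩
  rw [hc0] at hWtends
  rw [tendsto_nhds]
  intro U hU h0U
  set K' := {x : EuclideanSpace ℝ (Fin n) | V x ≤ γ} \ U with hK'def
  have hK'comp : IsCompact K' := hcompact.diff hU
  rcases K'.eq_empty_or_nonempty with hK'e | hK'ne
  · filter_upwards [Filter.eventually_ge_atTop (0 : ℝ)] with t ht
    have hzt : z t ∈ {x : EuclideanSpace ℝ (Fin n) | V x ≤ γ} := le_of_lt (hstay t ht)
    by_contra h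
    have : z t ∈ K' := ⟨hzt, h⟩
    rw [hK'e] at this
    exact this
  · obtain ⟨x₁, hx₁K, hx₁min⟩ := hK'comp.exists_isMinOn hK'ne hV.continuous.continuousOn
    have hx₁pos : 0 < V x₁ := by
      have hx₁0 : x₁ ≠ 0 := by
        intro h; rw [h] at hx₁K; exact hx₁K.2 h0U
      rcases lt_or_ge (V x₁) γ with h | h
      · exact hVpos _ (hsub ⟨hx₁0, h⟩) hx₁0
      · linarith
    have hev : ∀ᶠ t in Filter.atTop, W t < V x₁ :=
      hWtends.eventually_lt_const hx₁pos
    filter_upwards [hev, Filter.eventually_ge_atTop (0 : ℝ)] with t htW ht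
    by_contra h
    have hmem : z t ∈ K' := ⟨le_of_lt (hstay t ht), h⟩
    have := hx₁min hmem
    simp only [Set.mem_setOf_eq] at this
    exact absurd (lt_of_le_of_lt this htW) (lt_irrefl _)
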